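/- Let $H \in \mathbb{C}^{js \times js}$ be block upper Hessenberg with invertible subdiagonal blocks $\Gamma_2,\ldots,\Gamma_j$, and let $M \in \mathbb{C}^{s\times s}$ be invertible. Then for every nonzero $P_j \in \mathbb{C}^{s\times s}$ there exists a unique matrix polynomial $P(\lambda) = \sum_{i=0}^{j} \lambda^i P_i$ of degree $j$ with leading coefficient $P_j$ such that $P(H) \circ (E_1 M) := \sum_{i=0}^{j} H^i E_1 M P_i = 0$; moreover there exist matrices $\Theta_0,\ldots,\Theta_{j-1} \in \mathbb{C}^{s\times s}$, independent of $P_j$, such that $P_i = \Theta_i P_j$ for all $i < j$. -/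

import Mathlib

open Matrix Polynomial

abbrev Mat (s : ℕ) := Matrix (Fin s) (Fin s) ℂ

/-- The `(p,q)` block (of size `s × s`) of a `js × js` block matrix. -/
def blk {j s : ℕ} (H : Matrix (Fin j × Fin s) (Fin j × Fin s) ℂ) (p q : Fin j) :
    Mat s := Matrix.of fun a b => H (p, a) (q, b)

/-- The `i`-th block canonical vector `E_i = e_i ⊗ I_s`. -/
def blkE {j s : ℕ} (i : Fin j) : Matrix (Fin j × Fin s) (Fin s) ℂ :=
  Matrix.of fun pa b => if pa.1 = i ∧ pa.2 = b then 1 else 0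

/-- Block upper Hessenberg: all blocks strictly below the first subdiagonal vanish. -/
def BUH {j s : ℕ} (H : Matrix (Fin j × Fin s) (Fin j × Fin s) ℂ) : Prop :=
  ∀ p q : Fin j, (q : ℕ) + 1 < (p : ℕ) → blk H p q = 0

/-- The action `P(N) ∘ W := ∑ᵢ Nⁱ W Pᵢ` of a matrix polynomial on a block vector. -/
noncomputable def act {n : Type*} [Fintype n] [DecidableEq n] {s : ℕ}
    (P : Polynomial (Mat s)) (N : Matrix n n ℂ) (W : Matrix n (Fin s) ℂ) :
    Matrix n (Fin s) ℂ :=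
  ∑ i ∈ Finset.range (P.natDegree + 1), (N ^ i) * W * P.coeff i

/-- Evaluation of a matrix polynomial at a scalar: `P(z) = ∑ᵢ zⁱ Pᵢ`. -/
noncomputable def evalS {s : ℕ} (P : Polynomial (Mat s)) (z : ℂ) : Mat s :=
  ∑ i ∈ Finset.range (P.natDegree + 1), z ^ i • P.coeff i

/-- The subdiagonal block `Γ_i = H_{(i-1)(i-2)}` (paper indexing, `2 ≤ i ≤ j`),
with the convention `Γ_i = I` out of range (in particular `Γ₁ = I`). -/
noncomputable def Gam {j s : ℕ} (H : Matrix (Fin j × Fin s) (Fin j × Fin s) ℂ)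
    (i : ℕ) : Mat s :=
  if h : 2 ≤ i ∧ i ≤ j then blk H ⟨i - 1, by omega⟩ ⟨i - 2, by omega⟩ else 1

section aux
variable {j s : ℕ}

lemma blkmul_apply (A : Matrix (Fin j × Fin s) (Fin j × Fin s) ℂ)
    (B : Matrix (Fin j × Fin s) (Fin s) ℂ) (p : Fin j) (a : Fin s) (c : Fin s) :
    (A * B) (p, a) c = ∑ q : Fin j, ∑ b : Fin s, A (p, a) (q, b) * B (q, b) c := by
  rw [Matrix.mul_apply, Fintype.sum_prod_type]

lemma aux_zero (H : Matrix (Fin j × Fin s) (Fin j × Fin s) ℂ) (hH : BUH H)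
    (W : Matrix (Fin j × Fin s) (Fin s) ℂ)
    (hW0 : ∀ (p : Fin j) (a c : Fin s), 0 < (p : ℕ) → W (p, a) c = 0) :
    ∀ k (p : Fin j), k < (p : ℕ) → ∀ a c, (H ^ k * W) (p, a) c = 0 := by
  intro k
  induction k with
  | zero => intro p hp a c; simpa using hW0 p a c hp
  | succ k ih =>
    intro p hp a c
    rw [pow_succ', Matrix.mul_assoc, blkmul_apply]
    refine Finset.sum_eq_zero fun q _ => Finset.sum_eq_zero fun b _ => ?_
    rcases lt_or_ge k (q : ℕ) with h | h
    · rw [ih q h, mul_zero]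
    · have hz : blk H p q = 0 := hH p q (by omega)
      have : H (p, a) (q, b) = 0 := by
        have := congrFun (congrFun hz a) b
        simpa [blk] using this
      rw [this, zero_mul]

lemma aux_diag (H : Matrix (Fin j × Fin s) (Fin j × Fin s) ℂ) (hH : BUH H)
    (hinv : ∀ (m : ℕ) (hm : m + 1 < j),
      IsUnit (blk H ⟨m + 1, hm⟩ ⟨m, Nat.lt_of_succ_lt hm⟩))
    (W : Matrix (Fin j × Fin s) (Fin s) ℂ)
    (hW0 : ∀ (p : Fin j) (a c : Fin s), 0 < (p : ℕ) → W (p, a) c = 0)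
    (hj : 0 < j)
    (hWd : IsUnit (Matrix.of fun a c => W (⟨0, hj⟩, a) c)) :
    ∀ k (hk : k < j),
      IsUnit (Matrix.of fun a c => (H ^ k * W) (⟨k, hk⟩, a) c) := by
  intro k
  induction k with
  | zero => intro hk; simpa using hWd
  | succ k ih =>
    intro hk
    have hk' : k < j := by omega
    have heq : (Matrix.of fun a c => (H ^ (k+1) * W) (⟨k+1, hk⟩, a) c)
        = blk H ⟨k+1, hk⟩ ⟨k, hk'⟩ *
          (Matrix.of fun a c => (H ^ k * W) (⟨k, hk'⟩, a) c) := by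
      ext a c
      have lhs : (H ^ (k+1) * W) (⟨k+1, hk⟩, a) c
          = ∑ q : Fin j, ∑ b : Fin s, H (⟨k+1, hk⟩, a) (q, b) * (H ^ k * W) (q, b) c := by
        rw [pow_succ', Matrix.mul_assoc]; exact blkmul_apply H (H ^ k * W) _ a c
      rw [Matrix.of_apply, lhs, Finset.sum_eq_single (⟨k, hk'⟩ : Fin j)]
      · simp [Matrix.mul_apply, blk]
      · intro q _ hq
        refine Finset.sum_eq_zero fun b _ => ?_
        rcases lt_or_ge k (q : ℕ) with h | h
        · rw [aux_zero H hH W hW0 k q h, mul_zero]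
        · have hql : (q : ℕ) < k := by
            rcases lt_or_eq_of_le h with h' | h'
            · exact h'
            · exact absurd (Fin.ext h' : q = ⟨k, hk'⟩) hq
          have hz : blk H ⟨k+1, hk⟩ q = 0 := hH _ q (by simpa using by omega)
          have : H (⟨k+1, hk⟩, a) (q, b) = 0 := by
            have := congrFun (congrFun hz a) b
            simpa [blk] using this
          rw [this, zero_mul]
      · intro h; exact absurd (Finset.mem_univ _) h
    rw [heq]
    exact (hinv k hk).mul (ih hk')

def eqv {j s : ℕ} (k : Fin j) : Fin s ≃ {i : Fin j × Fin s // i.1 = k} :=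
  { toFun := fun a => ⟨(k, a), rfl⟩
    invFun := fun i => i.1.2
    left_inv := fun a => rfl
    right_inv := fun i => Subtype.ext (Prod.ext i.2.symm rfl) }

lemma aux_K_unit (H : Matrix (Fin j × Fin s) (Fin j × Fin s) ℂ) (hH : BUH H)
    (hinv : ∀ (m : ℕ) (hm : m + 1 < j),
      IsUnit (blk H ⟨m + 1, hm⟩ ⟨m, Nat.lt_of_succ_lt hm⟩))
    (W : Matrix (Fin j × Fin s) (Fin s) ℂ)
    (hW0 : ∀ (p : Fin j) (a c : Fin s), 0 < (p : ℕ) → W (p, a) c = 0)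
    (hj : 0 < j)
    (hWd : IsUnit (Matrix.of fun a c => W (⟨0, hj⟩, a) c)) :
    IsUnit (Matrix.of fun (pa qb : Fin j × Fin s) =>
      (H ^ ((qb.1 : ℕ)) * W) pa qb.2) := by
  set K : Matrix (Fin j × Fin s) (Fin j × Fin s) ℂ :=
    Matrix.of fun pa qb => (H ^ ((qb.1 : ℕ)) * W) pa qb.2 with hK
  have hBT : K.BlockTriangular Prod.fst := by
    intro x y h
    show (H ^ ((y.1 : ℕ)) * W) x y.2 = 0
    have := aux_zero H hH W hW0 (y.1 : ℕ) x.1 (by exact_mod_cast h) x.2 y.2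
    simpa using this
  rw [Matrix.isUnit_iff_isUnit_det, hBT.det, isUnit_iff_ne_zero,
    Finset.prod_ne_zero_iff]
  intro k hk
  let e : Fin s ≃ {i : Fin j × Fin s // i.1 = k} := eqv k
  have hsub : (K.toSquareBlock Prod.fst k).submatrix e e
      = Matrix.of fun a c => (H ^ ((k : ℕ)) * W) (⟨(k : ℕ), k.isLt⟩, a) c := by
    ext a c
    simp [Matrix.toSquareBlock_def, e, eqv, hK]
  have := aux_diag H hH hinv W hW0 hj hWd (k : ℕ) k.isLt
  rw [Matrix.isUnit_iff_isUnit_det, isUnit_iff_ne_zero] at this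
  rwa [← Matrix.det_submatrix_equiv_self e, hsub]

/-- existence and uniqueness of the block characteristic polynomial of a
block upper Hessenberg matrix with respect to `E₁ M`, for each nonzero leading
coefficient, together with the matrices `Θᵢ` independent of the leading coefficient. -/
theorem block_char_poly_unique {j s : ℕ} (hj : 0 < j)
    (H : Matrix (Fin j × Fin s) (Fin j × Fin s) ℂ) (hH : BUH H)
    (hinv : ∀ (m : ℕ) (hm : m + 1 < j),
      IsUnit (blk H ⟨m + 1, hm⟩ ⟨m, by omega⟩))
    (M : Mat s) (hM : IsUnit M) :
    ∃ Θ : ℕ → Mat s, ∀ Pj : Mat s, Pj ≠ 0 →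
      (∃! P : Polynomial (Mat s), P.natDegree = j ∧ P.leadingCoeff = Pj ∧
        act P H (blkE (⟨0, hj⟩ : Fin j) * M) = 0) ∧
      (∀ P : Polynomial (Mat s), P.natDegree = j → P.leadingCoeff = Pj →
        act P H (blkE (⟨0, hj⟩ : Fin j) * M) = 0 →
        ∀ i < j, P.coeff i = Θ i * Pj) := by
  set W : Matrix (Fin j × Fin s) (Fin s) ℂ := blkE (⟨0, hj⟩ : Fin j) * M with hWdef
  have hW0 : ∀ (p : Fin j) (a c : Fin s), 0 < (p : ℕ) → W (p, a) c = 0 := by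
    intro p a c hp
    have hne : (p : ℕ) ≠ 0 := by omega
    rw [hWdef]
    change (∑ x, blkE (⟨0, hj⟩ : Fin j) (p, a) x * M x c) = 0
    simp [blkE, Fin.ext_iff, hne]
  have hWd : IsUnit (Matrix.of fun a c => W (⟨0, hj⟩, a) c) := by
    have hEq : (Matrix.of fun a c => W (⟨0, hj⟩, a) c) = M := by
      ext a c
      rw [hWdef]
      change (∑ x, blkE (⟨0, hj⟩ : Fin j) (⟨0, hj⟩, a) x * M x c) = M a c
      simp [blkE]
    rw [hEq]; exact hM
  set K : Matrix (Fin j × Fin s) (Fin j × Fin s) ℂ :=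
    Matrix.of (fun pa qb => (H ^ ((qb.1 : ℕ)) * W) pa qb.2) with hKdef
  have hKu : IsUnit K := aux_K_unit H hH hinv W hW0 hj hWd
  have hKdet : IsUnit K.det := (Matrix.isUnit_iff_isUnit_det K).mp hKu
  set T : Matrix (Fin j × Fin s) (Fin s) ℂ := -(K⁻¹ * (H ^ j * W)) with hTdef
  set Θ : ℕ → Mat s := fun i =>
    if h : i < j then Matrix.of (fun a b => T (⟨i, h⟩, a) b) else 0 with hΘdef
  -- the stacked-coefficients matrix
  have hact : ∀ P : Polynomial (Mat s), P.natDegree = j →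
      act P H W
        = K * (Matrix.of fun (qb : Fin j × Fin s) c => P.coeff (qb.1 : ℕ) qb.2 c)
          + (H ^ j * W) * P.coeff j := by
    intro P hdeg
    have h1 : act P H W
        = ∑ i ∈ Finset.range j, H ^ i * W * P.coeff i + H ^ j * W * P.coeff j := by
      rw [act, hdeg, Finset.sum_range_succ]
    rw [h1]
    congr 1
    ext pa c
    obtain ⟨p, a⟩ := pa
    have lhs_eq : (∑ i ∈ Finset.range j, H ^ i * W * P.coeff i) (p, a) c
        = ∑ q : Fin j, ∑ b : Fin s,
            (H ^ (q : ℕ) * W) (p, a) b * P.coeff (q : ℕ) b c := by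
      rw [Matrix.sum_apply,
        ← Fin.sum_univ_eq_sum_range (fun i => (H ^ i * W * P.coeff i) (p, a) c) j]
      exact Finset.sum_congr rfl fun q _ => Matrix.mul_apply
    have rhs_eq : (K * (Matrix.of fun (qb : Fin j × Fin s) c =>
          P.coeff (qb.1 : ℕ) qb.2 c)) (p, a) c
        = ∑ q : Fin j, ∑ b : Fin s,
            (H ^ (q : ℕ) * W) (p, a) b * P.coeff (q : ℕ) b c := by
      rw [Matrix.mul_apply, Fintype.sum_prod_type]
      rfl
    rw [lhs_eq, rhs_eq]
  -- main equivalence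
  have main : ∀ (Pj : Mat s) (P : Polynomial (Mat s)), P.natDegree = j → P.coeff j = Pj →
      (act P H W = 0 ↔
        (Matrix.of fun (qb : Fin j × Fin s) c => P.coeff (qb.1 : ℕ) qb.2 c) = T * Pj) := by
    intro Pj P hdeg hlc
    set S := (Matrix.of fun (qb : Fin j × Fin s) c => P.coeff (qb.1 : ℕ) qb.2 c)
    rw [hact P hdeg, hlc]
    constructor
    · intro h
      have h2 : K * S = -((H ^ j * W) * Pj) := by
        have := add_eq_zero_iff_eq_neg.mp h
        exact this
      calc S = K⁻¹ * (K * S) := by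
              rw [← Matrix.mul_assoc, Matrix.nonsing_inv_mul K hKdet, Matrix.one_mul]
        _ = K⁻¹ * (-((H ^ j * W) * Pj)) := by rw [h2]
        _ = T * Pj := by
              rw [hTdef, Matrix.neg_mul, Matrix.mul_neg, Matrix.mul_assoc K⁻¹ (H ^ j * W) Pj]
    · intro h
      show K * S + H ^ j * W * Pj = 0
      rw [h, ← Matrix.mul_assoc K T Pj, hTdef, Matrix.mul_neg,
        ← Matrix.mul_assoc K K⁻¹ (H ^ j * W), Matrix.mul_nonsing_inv K hKdet,
        Matrix.one_mul, Matrix.neg_mul, neg_add_cancel]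
  have coeff_iff : ∀ (Pj : Mat s) (P : Polynomial (Mat s)),
      ((Matrix.of fun (qb : Fin j × Fin s) c => P.coeff (qb.1 : ℕ) qb.2 c) = T * Pj ↔
        ∀ i < j, P.coeff i = Θ i * Pj) := by
    intro Pj P
    constructor
    · intro h i hi
      ext a c
      have h1 := congrFun (congrFun h (⟨i, hi⟩, a)) c
      simp only [Matrix.of_apply] at h1
      rw [hΘdef]
      simp only [dif_pos hi]
      rw [h1, Matrix.mul_apply, Matrix.mul_apply]
      rfl
    · intro h
      ext ⟨q, b⟩ c
      have h1 := congrFun (congrFun (h (q : ℕ) q.isLt) b) c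
      rw [hΘdef] at h1
      simp only [dif_pos q.isLt] at h1
      simp only [Matrix.of_apply]
      rw [h1, Matrix.mul_apply, Matrix.mul_apply]
      rfl
  refine ⟨Θ, fun Pj hPj => ?_⟩
  -- construct the polynomial
  set cf : ℕ → Mat s := fun i => if i = j then Pj else Θ i * Pj with hcf
  set P₀ : Polynomial (Mat s) := ∑ i ∈ Finset.range (j + 1), Polynomial.monomial i (cf i)
    with hP₀
  have hcoeff : ∀ k, P₀.coeff k = if k < j + 1 then cf k else 0 := by
    intro k
    rw [hP₀, Polynomial.finset_sum_coeff]
    simp only [Polynomial.coeff_monomial]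
    rw [Finset.sum_ite_eq' (Finset.range (j + 1)) k cf]
    simp [Finset.mem_range]
  have hcj : P₀.coeff j = Pj := by
    rw [hcoeff]; simp [hcf]
  have hdeg₀ : P₀.natDegree = j := by
    apply le_antisymm
    · refine Polynomial.natDegree_le_iff_coeff_eq_zero.mpr fun m hm => ?_
      rw [hcoeff, if_neg (by omega)]
    · exact Polynomial.le_natDegree_of_ne_zero (by rw [hcj]; exact hPj)
  have hlead₀ : P₀.leadingCoeff = Pj := by
    rw [Polynomial.leadingCoeff, hdeg₀, hcj]
  have hstack₀ : ∀ i < j, P₀.coeff i = Θ i * Pj := by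
    intro i hi
    rw [hcoeff, if_pos (by omega), hcf]
    simp [Nat.ne_of_lt hi]
  have hact₀ : act P₀ H W = 0 :=
    (main Pj P₀ hdeg₀ hcj).mpr ((coeff_iff Pj P₀).mpr hstack₀)
  have lcoeff : ∀ P : Polynomial (Mat s), P.natDegree = j → P.leadingCoeff = Pj →
      P.coeff j = Pj := by
    intro P hd hl
    rw [← hl, Polynomial.leadingCoeff, hd]
  refine ⟨⟨P₀, ⟨hdeg₀, hlead₀, hact₀⟩, ?_⟩, ?_⟩
  · rintro Q ⟨hQd, hQl, hQa⟩
    have hQj : Q.coeff j = Pj := lcoeff Q hQd hQl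
    have hQc : ∀ i < j, Q.coeff i = Θ i * Pj :=
      (coeff_iff Pj Q).mp ((main Pj Q hQd hQj).mp hQa)
    ext k
    rcases lt_trichotomy k j with hk | hk | hk
    · rw [hQc k hk, hstack₀ k hk]
    · subst hk; rw [hQj, hcj]
    · rw [Polynomial.coeff_eq_zero_of_natDegree_lt (by omega),
        Polynomial.coeff_eq_zero_of_natDegree_lt (by omega)]
  · intro P hd hl ha
    exact (coeff_iff Pj P).mp ((main Pj P hd (lcoeff P hd hl)).mp ha)
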